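/- Let A and ΔA be real m×n matrices with rank(A) = n and ‖ΔA‖₂‖A†‖₂ ≤ 1/2. Then the largest principal angle θ_n between range(A) and range(A+ΔA) satisfies sin θ_n ≤ 2 κ₂(A) ‖(I − AA†)ΔA‖₂ / ‖A‖₂, where κ₂(A) = ‖A‖₂‖A†‖₂. -/

import Mathlib

open Matrix

/-- Spectral (two-)norm of a real rectangular matrix. -/
noncomputable def spec {m n : ℕ} (A : Matrix (Fin m) (Fin n) ℝ) : ℝ :=
  ‖LinearMap.toContinuousLinearMap (Matrix.toEuclideanLin A)‖

/-- Frobenius norm. -/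
noncomputable def frob {m n : ℕ} (A : Matrix (Fin m) (Fin n) ℝ) : ℝ :=
  Real.sqrt (∑ i, ∑ j, (A i j) ^ 2)

/-- Leverage score: squared Euclidean norm of the j-th row. -/
noncomputable def lev {m n : ℕ} (Q : Matrix (Fin m) (Fin n) ℝ) (j : Fin m) : ℝ :=
  ∑ k, (Q j k) ^ 2

/-- Euclidean norm of the j-th row. -/
noncomputable def rnorm {m n : ℕ} (A : Matrix (Fin m) (Fin n) ℝ) (j : Fin m) : ℝ :=
  Real.sqrt (∑ k, (A j k) ^ 2)

/-- Moore–Penrose inverse of a full column rank matrix. -/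
noncomputable def pinv {m n : ℕ} (A : Matrix (Fin m) (Fin n) ℝ) : Matrix (Fin n) (Fin m) ℝ :=
  (Aᵀ * A)⁻¹ * Aᵀ

open scoped Matrix.Norms.L2Operator

lemma spec_eq_norm {m n : ℕ} (A : Matrix (Fin m) (Fin n) ℝ) : spec A = ‖A‖ := rfl

lemma spec_nonneg {m n : ℕ} (A : Matrix (Fin m) (Fin n) ℝ) : 0 ≤ spec A := by
  rw [spec_eq_norm]; exact norm_nonneg _

/-- abbreviation for the CLM of a matrix -/
noncomputable def gm {m n : ℕ} (A : Matrix (Fin m) (Fin n) ℝ) :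
    EuclideanSpace ℝ (Fin n) →L[ℝ] EuclideanSpace ℝ (Fin m) :=
  LinearMap.toContinuousLinearMap (Matrix.toEuclideanLin A)

lemma spec_eq_gm {m n : ℕ} (A : Matrix (Fin m) (Fin n) ℝ) : spec A = ‖gm A‖ := rfl

lemma gm_mul {m n k : ℕ} (A : Matrix (Fin m) (Fin n) ℝ) (B : Matrix (Fin n) (Fin k) ℝ) :
    gm (A * B) = (gm A).comp (gm B) := by
  ext1 x
  exact congrArg (WithLp.toLp 2) congr($(Matrix.toLin'_mul A B) x.ofLp)

lemma gm_mul_apply {m n k : ℕ} (A : Matrix (Fin m) (Fin n) ℝ) (B : Matrix (Fin n) (Fin k) ℝ)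
    (x : EuclideanSpace ℝ (Fin k)) : gm (A * B) x = gm A (gm B x) := by
  rw [gm_mul]; rfl

lemma gm_one {n : ℕ} : gm (1 : Matrix (Fin n) (Fin n) ℝ) = ContinuousLinearMap.id ℝ _ := by
  ext1 x
  exact congrArg (WithLp.toLp 2) congr($(Matrix.toLin'_one) x.ofLp)

lemma gm_add {m n : ℕ} (A B : Matrix (Fin m) (Fin n) ℝ) : gm (A + B) = gm A + gm B := by
  unfold gm; rw [map_add, map_add]

/-- full column rank implies injective mulVec -/
lemma inj_of_rank {m n : ℕ} (A : Matrix (Fin m) (Fin n) ℝ) (hA : A.rank = n) :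
    Function.Injective A.mulVec := by
  have hker : LinearMap.ker A.mulVecLin = ⊥ := by
    have h1 := LinearMap.finrank_range_add_finrank_ker A.mulVecLin
    rw [Module.finrank_fintype_fun_eq_card, Fintype.card_fin] at h1
    have h2 : A.rank = Module.finrank ℝ (LinearMap.range A.mulVecLin) := rfl
    have h3 : Module.finrank ℝ (LinearMap.ker A.mulVecLin) = 0 := by omega
    exact Submodule.finrank_eq_zero.mp h3
  rw [← Matrix.coe_mulVecLin]
  exact LinearMap.ker_eq_bot.mp hker

lemma gram_isUnit {m n : ℕ} (A : Matrix (Fin m) (Fin n) ℝ)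
    (hA : Function.Injective A.mulVec) : IsUnit (Aᵀ * A) := by
  rw [← Matrix.mulVec_injective_iff_isUnit, ← Matrix.coe_mulVecLin]
  apply LinearMap.ker_eq_bot.mp
  rw [Matrix.ker_mulVecLin_transpose_mul_self]
  apply LinearMap.ker_eq_bot.mpr
  rw [Matrix.coe_mulVecLin]
  exact hA

lemma pinv_mul {m n : ℕ} (A : Matrix (Fin m) (Fin n) ℝ)
    (hA : Function.Injective A.mulVec) : pinv A * A = 1 := by
  unfold pinv
  rw [Matrix.mul_assoc]
  exact Matrix.nonsing_inv_mul _ (Matrix.isUnit_iff_isUnit_det _ |>.mp (gram_isUnit A hA))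

theorem stmt8 {m n : ℕ} (A ΔA : Matrix (Fin m) (Fin n) ℝ)
    (hA : A.rank = n) (hpert : spec ΔA * spec (pinv A) ≤ 1 / 2) :
    spec ((1 - A * pinv A) * ((A + ΔA) * pinv (A + ΔA))) ≤
      2 * (spec A * spec (pinv A)) * (spec ((1 - A * pinv A) * ΔA) / spec A) := by
  rcases Nat.eq_zero_or_pos n with hn | hn
  · -- degenerate case n = 0
    subst hn
    have hz : (A + ΔA) * pinv (A + ΔA) = 0 := by
      ext i j
      simp [Matrix.mul_apply]
    rw [hz, Matrix.mul_zero]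
    have h0 : spec (0 : Matrix (Fin m) (Fin m) ℝ) = 0 := by
      rw [spec_eq_norm, norm_zero]
    rw [h0]
    apply mul_nonneg
    · apply mul_nonneg (by norm_num)
      exact mul_nonneg (spec_nonneg _) (spec_nonneg _)
    · exact div_nonneg (spec_nonneg _) (spec_nonneg _)
  · set B := A + ΔA with hB
    have hinjA : Function.Injective A.mulVec := inj_of_rank A hA
    have hAdA : pinv A * A = 1 := pinv_mul A hinjA
    -- key inequality : ‖v‖ ≤ 2 ‖pinv A‖ ‖B v‖
    have hd2 : spec (pinv A * ΔA) ≤ 1 / 2 := by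
      calc spec (pinv A * ΔA) = ‖pinv A * ΔA‖ := rfl
        _ ≤ ‖pinv A‖ * ‖ΔA‖ := Matrix.l2_opNorm_mul _ _
        _ = spec ΔA * spec (pinv A) := by rw [spec_eq_norm, spec_eq_norm]; ring
        _ ≤ 1 / 2 := hpert
    have key : ∀ v : EuclideanSpace ℝ (Fin n), ‖v‖ ≤ 2 * spec (pinv A) * ‖gm B v‖ := by
      intro v
      have hsplit : pinv A * B = 1 + pinv A * ΔA := by
        rw [hB, Matrix.mul_add, hAdA]
      have e1 : gm (pinv A) (gm B v) = v + gm (pinv A * ΔA) v := by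
        rw [← gm_mul_apply, hsplit, gm_add, gm_one]
        rfl
      have e2 : v = gm (pinv A) (gm B v) - gm (pinv A * ΔA) v := by
        rw [e1]; abel
      have h3 : ‖v‖ ≤ ‖gm (pinv A)‖ * ‖gm B v‖ + ‖gm (pinv A * ΔA)‖ * ‖v‖ := by
        calc ‖v‖ = ‖gm (pinv A) (gm B v) - gm (pinv A * ΔA) v‖ := by rw [← e2]
          _ ≤ ‖gm (pinv A) (gm B v)‖ + ‖gm (pinv A * ΔA) v‖ := norm_sub_le _ _
          _ ≤ ‖gm (pinv A)‖ * ‖gm B v‖ + ‖gm (pinv A * ΔA)‖ * ‖v‖ := by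
              gcongr <;> exact ContinuousLinearMap.le_opNorm _ _
      have h4 : ‖gm (pinv A * ΔA)‖ * ‖v‖ ≤ (1 / 2) * ‖v‖ := by
        apply mul_le_mul_of_nonneg_right _ (norm_nonneg v)
        exact hd2
      have h5 : (0:ℝ) ≤ ‖gm (pinv A)‖ * ‖gm B v‖ := by positivity
      rw [spec_eq_gm]
      nlinarith [norm_nonneg v]
    -- B has full column rank
    have hinjB : Function.Injective B.mulVec := by
      rw [← Matrix.coe_mulVecLin, ← LinearMap.ker_eq_bot, LinearMap.ker_eq_bot']
      intro v hv
      rw [Matrix.mulVecLin_apply] at hv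
      have hgBw : gm B ((WithLp.equiv 2 (Fin n → ℝ)).symm v) = 0 := by
        show (WithLp.equiv 2 (Fin m → ℝ)).symm (B *ᵥ v) = 0
        rw [hv]; rfl
      have h := key ((WithLp.equiv 2 (Fin n → ℝ)).symm v)
      rw [hgBw, norm_zero, mul_zero] at h
      have hw0 := norm_le_zero_iff.mp h
      have hw1 := congrArg (WithLp.equiv 2 (Fin n → ℝ)) hw0
      simpa using hw1
    have hBdB : pinv B * B = 1 := pinv_mul B hinjB
    -- the projection P = B * pinv B has norm ≤ 1
    set P : Matrix (Fin m) (Fin m) ℝ := B * pinv B with hP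
    have hPsym : Pᵀ = P := by
      have hgram : ((Bᵀ * B)⁻¹)ᵀ = (Bᵀ * B)⁻¹ := by
        rw [Matrix.transpose_nonsing_inv, Matrix.transpose_mul, Matrix.transpose_transpose]
      rw [hP]
      unfold pinv
      rw [← Matrix.mul_assoc, Matrix.transpose_mul, Matrix.transpose_mul,
        Matrix.transpose_transpose, hgram, Matrix.mul_assoc]
    have hPidem : P * P = P := by
      rw [hP]
      calc B * pinv B * (B * pinv B) = B * (pinv B * B) * pinv B := by
            rw [Matrix.mul_assoc, Matrix.mul_assoc, Matrix.mul_assoc]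
        _ = B * pinv B := by rw [hBdB, Matrix.mul_one]
    have hPnorm : ‖P‖ ≤ 1 := by
      have hcs : ‖star P * P‖ = ‖P‖ * ‖P‖ := CStarRing.norm_star_mul_self
      rw [Matrix.star_eq_conjTranspose, Matrix.conjTranspose_eq_transpose_of_trivial,
        hPsym, hPidem] at hcs
      nlinarith [norm_nonneg P]
    -- ‖pinv B‖ ≤ 2 ‖pinv A‖
    have hpinvB : spec (pinv B) ≤ 2 * spec (pinv A) := by
      rw [spec_eq_gm]
      apply ContinuousLinearMap.opNorm_le_bound
      · have := spec_nonneg (pinv A); linarith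
      intro y
      calc ‖gm (pinv B) y‖ ≤ 2 * spec (pinv A) * ‖gm B (gm (pinv B) y)‖ := key _
        _ = 2 * spec (pinv A) * ‖gm P y‖ := by rw [← gm_mul_apply]
        _ ≤ 2 * spec (pinv A) * (‖P‖ * ‖y‖) := by
            have h1 : ‖gm P y‖ ≤ ‖gm P‖ * ‖y‖ := ContinuousLinearMap.le_opNorm _ _
            have h2 : ‖gm P‖ = ‖P‖ := rfl
            rw [h2] at h1
            have h3 := spec_nonneg (pinv A)
            exact mul_le_mul_of_nonneg_left h1 (by linarith)
        _ ≤ 2 * spec (pinv A) * (1 * ‖y‖) := by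
            have h3 := spec_nonneg (pinv A)
            have h4 := norm_nonneg y
            have h5 : ‖P‖ * ‖y‖ ≤ 1 * ‖y‖ := mul_le_mul_of_nonneg_right hPnorm h4
            exact mul_le_mul_of_nonneg_left h5 (by linarith)
        _ = 2 * spec (pinv A) * ‖y‖ := by ring
    -- rewrite the LHS matrix
    have hmat : (1 - A * pinv A) * (B * pinv B) = ((1 - A * pinv A) * ΔA) * pinv B := by
      have h1 : (1 - A * pinv A) * B = (1 - A * pinv A) * ΔA := by
        rw [hB, Matrix.mul_add, Matrix.sub_mul, Matrix.sub_mul, Matrix.one_mul, Matrix.one_mul]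
        have : A * pinv A * A = A := by
          rw [Matrix.mul_assoc, hAdA, Matrix.mul_one]
        rw [this]
        abel
      rw [← Matrix.mul_assoc, h1]
    set X := spec ((1 - A * pinv A) * ΔA) with hX
    have hXnn : 0 ≤ X := spec_nonneg _
    have hchain : spec ((1 - A * pinv A) * (B * pinv B)) ≤ X * (2 * spec (pinv A)) := by
      rw [hmat]
      calc spec (((1 - A * pinv A) * ΔA) * pinv B)
          ≤ ‖(1 - A * pinv A) * ΔA‖ * ‖pinv B‖ := Matrix.l2_opNorm_mul _ _
        _ = X * spec (pinv B) := rfl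
        _ ≤ X * (2 * spec (pinv A)) := mul_le_mul_of_nonneg_left hpinvB hXnn
    -- spec A ≠ 0
    have hAne : A ≠ 0 := by
      intro h
      rw [h, Matrix.rank_zero] at hA
      omega
    have hsAne : spec A ≠ 0 := by
      rw [spec_eq_norm]
      exact norm_ne_zero_iff.mpr hAne
    have hrhs : 2 * (spec A * spec (pinv A)) * (X / spec A) = X * (2 * spec (pinv A)) := by
      field_simp
    rw [hrhs]
    exact hchain
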